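/- For every ε > 0 there exists a constant c ≥ 0 such that for every stopping time τ with respect to the filtration (F_n) satisfying E[τ] < ∞, one has E[M_τ] ≤ ε·E[τ] + c. In particular, E[M_τ] = o(E[τ]) uniformly over stopping times τ as E[τ] → ∞. -/

import Mathlib

open MeasureTheory ProbabilityTheory Filter
open scoped ENNReal

/-- Let `(W_n)_{n ≥ 1}` be i.i.d. nonnegative integrable random variables on a
probability space, `ℱ n = σ(W_1, …, W_n)` (with `ℱ 0` trivial), `M 0 = 0` and
`M n = max_{1 ≤ k ≤ n} W k`.  Then for every `ε > 0` there is a constant `c ≥ 0` such that for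
every stopping time `τ` w.r.t. `ℱ` with `E[τ] < ∞` one has `E[M_τ] ≤ ε·E[τ] + c`. -/
theorem maxIID_stoppedValue_le_of_pos
    {Ω : Type*} {m : MeasurableSpace Ω} {P : Measure Ω} [IsProbabilityMeasure P]
    (W : ℕ → Ω → ℝ)
    (hW_meas : ∀ n, Measurable (W n))
    (hW_indep : iIndepFun (fun n : ℕ => W (n + 1)) P)
    (hW_ident : ∀ n, 1 ≤ n → IdentDistrib (W n) (W 1) P P)
    (hW_nonneg : ∀ n ω, 1 ≤ n → 0 ≤ W n ω)
    (hW_int : ∀ n, 1 ≤ n → Integrable (W n) P)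
    (ℱ : Filtration ℕ m)
    (hℱ : ∀ n, ℱ n = ⨆ i ∈ Set.Icc 1 n, MeasurableSpace.comap (W i) inferInstance)
    (M : ℕ → Ω → ℝ)
    (hM0 : M 0 = fun _ => 0)
    (hM : ∀ n, M (n + 1) = fun ω => max (M n ω) (W (n + 1) ω)) :
    ∀ ε : ℝ, 0 < ε → ∃ c : ℝ, 0 ≤ c ∧
      ∀ τ : Ω → ℕ, IsStoppingTime ℱ (fun ω => (τ ω : WithTop ℕ)) → Integrable (fun ω => (τ ω : ℝ)) P →
        ∫ ω, M (τ ω) ω ∂P ≤ ε * ∫ ω, (τ ω : ℝ) ∂P + c := by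
  intro ε hε
  -- choose the truncation level N
  obtain ⟨N, hN⟩ : ∃ N : ℕ, ∫ ω, max (W 1 ω - N) 0 ∂P < ε := by
    have h_tend : Tendsto (fun n : ℕ => ∫ ω, max (W 1 ω - n) 0 ∂P) atTop (nhds 0) := by
      have h' := tendsto_integral_of_dominated_convergence (μ := P)
        (F := fun (n : ℕ) ω => max (W 1 ω - n) 0) (f := fun _ => (0:ℝ))
        (bound := fun ω => W 1 ω) ?_ (hW_int 1 le_rfl) ?_ ?_
      · simpa using h' 
      · exact fun n => (((hW_meas 1).sub measurable_const).max measurable_const).aestronglyMeasurable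
      · intro n
        filter_upwards with ω
        rw [Real.norm_eq_abs, abs_of_nonneg (le_max_right _ _)]
        exact max_le (by linarith [hW_nonneg 1 ω le_rfl, Nat.cast_nonneg (α := ℝ) n])
          (hW_nonneg 1 ω le_rfl)
      · filter_upwards with ω
        have : ∀ᶠ n : ℕ in atTop, max (W 1 ω - n) 0 = 0 := by
          filter_upwards [eventually_ge_atTop ⌈W 1 ω⌉₊] with n hn
          have : W 1 ω ≤ n := le_trans (Nat.le_ceil _) (by exact_mod_cast hn)
          simp [max_eq_right, sub_nonpos.2 this]
        exact Tendsto.congr' (this.mono fun n hn => hn.symm) tendsto_const_nhds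
    exact (h_tend.eventually (gt_mem_nhds hε)).exists
  -- basic facts about M
  have hM_meas : ∀ n, Measurable (M n) := by
    intro n
    induction n with
    | zero => rw [hM0]; exact measurable_const
    | succ n ih => rw [hM]; exact ih.max (hW_meas (n + 1))
  have hM_nonneg : ∀ n ω, 0 ≤ M n ω := by
    intro n
    induction n with
    | zero => intro ω; rw [hM0]
    | succ n ih => intro ω; rw [hM]; exact le_trans (ih ω) (le_max_left _ _)
  -- pointwise key bound
  have hkey : ∀ n ω, M n ω ≤ N + ∑ k ∈ Finset.range n, max (W (k + 1) ω - N) 0 := by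
    intro n
    induction n with
    | zero => intro ω; rw [hM0]; simp [Nat.cast_nonneg]
    | succ n ih =>
        intro ω
        rw [hM, Finset.sum_range_succ]
        refine max_le (le_trans (ih ω) ?_) ?_
        · have : (0:ℝ) ≤ max (W (n + 1) ω - N) 0 := le_max_right _ _
          linarith
        · have h1 : W (n + 1) ω - N ≤ max (W (n + 1) ω - N) 0 := le_max_left _ _
          have h2 : (0:ℝ) ≤ ∑ k ∈ Finset.range n, max (W (k + 1) ω - N) 0 :=
            Finset.sum_nonneg fun k _ => le_max_right _ _
          linarith
  -- the truncated variables, in ℝ≥0∞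
  set g : ℝ → ℝ≥0∞ := fun x => ENNReal.ofReal (max (x - N) 0) with hg_def
  have hg_meas : Measurable g :=
    ((measurable_id.sub measurable_const).max measurable_const).ennreal_ofReal
  set K : ℝ≥0∞ := ∫⁻ ω, g (W 1 ω) ∂P with hK_def
  have hK_le : K ≤ ENNReal.ofReal ε := by
    have hint : Integrable (fun ω => max (W 1 ω - N) 0) P := by
      have := ((hW_int 1 le_rfl).sub (integrable_const (N : ℝ))).pos_part
      simpa [max_comm] using this
    have : K = ENNReal.ofReal (∫ ω, max (W 1 ω - N) 0 ∂P) :=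
      (ofReal_integral_eq_lintegral_ofReal hint
        (Filter.Eventually.of_forall fun ω => le_max_right _ _)).symm
    rw [this]
    exact ENNReal.ofReal_le_ofReal hN.le
  have hK_ident : ∀ k : ℕ, ∫⁻ ω, g (W (k + 1) ω) ∂P = K :=
    fun k => ((hW_ident (k + 1) (by omega)).comp hg_meas).lintegral_eq
  -- independence of W (k+1) from ℱ k
  have h_comap_le : ∀ i : ℕ, MeasurableSpace.comap (W (i + 1))
      (inferInstance : MeasurableSpace ℝ) ≤ m := fun i => (hW_meas (i + 1)).comap_le
  have hℱ' : ∀ k, ℱ k = ⨆ i ∈ Set.Iio k, MeasurableSpace.comap (W (i + 1)) inferInstance := by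
    intro k
    rw [hℱ]
    apply le_antisymm
    · refine iSup₂_le fun i hi => ?_
      simp only [Set.mem_Icc] at hi
      obtain ⟨j, rfl⟩ : ∃ j, i = j + 1 := ⟨i - 1, by omega⟩
      exact le_biSup (fun i => MeasurableSpace.comap (W (i + 1)) inferInstance) (show j ∈ Set.Iio k from Set.mem_Iio.2 (by omega))
    · refine iSup₂_le fun j hj => ?_
      simp only [Set.mem_Iio] at hj
      exact le_biSup (fun i => MeasurableSpace.comap (W i) inferInstance) (show j + 1 ∈ Set.Icc 1 k from Set.mem_Icc.2 ⟨by omega, by omega⟩)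
  have h_indep : ∀ k : ℕ, Indep (MeasurableSpace.comap (W (k + 1)) inferInstance) (ℱ k) P := by
    intro k
    have h1 : iIndep (fun i : ℕ => MeasurableSpace.comap (W (i + 1)) inferInstance) P :=
      (iIndepFun_iff_iIndep _ _ _).1 hW_indep
    have h2 := indep_iSup_of_disjoint h_comap_le h1
      (Set.disjoint_singleton_left.mpr (by simp : (k : ℕ) ∉ Set.Iio k))
    rw [hℱ' k]
    simpa using h2
  refine ⟨N, Nat.cast_nonneg N, ?_⟩
  intro τ hτ hτ_int
  have hτ_meas : Measurable τ :=
    measurable_to_countable' fun n => ℱ.le n _ (by convert hτ.measurableSet_eq n using 1; ext ω; simp)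
  set A : ℕ → Set Ω := fun k => {ω | k < τ ω} with hA_def
  have hA_mf : ∀ k, MeasurableSet[(ℱ k : MeasurableSpace Ω)] (A k) := by
    intro k
    have h := (hτ.measurableSet_le k).compl
    have : A k = {ω | τ ω ≤ k}ᶜ := by ext ω; simp [hA_def, not_le]
    rw [this]; simpa using h
  have hA_m : ∀ k, MeasurableSet (A k) := fun k => ℱ.le k _ (hA_mf k)
  have hprod : ∀ k : ℕ, ∫⁻ ω, g (W (k + 1) ω) * (A k).indicator 1 ω ∂P = K * P (A k) := by
    intro k
    have h1 : Measurable[MeasurableSpace.comap (W (k + 1)) inferInstance]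
        fun ω => g (W (k + 1) ω) := hg_meas.comp (Measurable.of_comap_le le_rfl)
    have h2 : Measurable[(ℱ k : MeasurableSpace Ω)] ((A k).indicator (1 : Ω → ℝ≥0∞)) :=
      measurable_const.indicator (hA_mf k)
    rw [lintegral_mul_eq_lintegral_mul_lintegral_of_independent_measurableSpace
      (h_comap_le k) (ℱ.le k) (h_indep k) h1 h2, hK_ident k, lintegral_indicator_one (hA_m k)]
  set T : ℝ≥0∞ := ∫⁻ ω, (τ ω : ℝ≥0∞) ∂P with hT_def
  have hT_eq : T = ∑' k, P (A k) := by
    have hpt : ∀ ω, (τ ω : ℝ≥0∞) = ∑' k, (A k).indicator (1 : Ω → ℝ≥0∞) ω := by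
      intro ω
      rw [tsum_eq_sum (s := Finset.range (τ ω))
        (fun k hk => Set.indicator_of_notMem
          (fun h => hk (Finset.mem_range.mpr (by exact h))) 1)]
      rw [Finset.sum_congr rfl (fun k hk =>
        Set.indicator_of_mem (by exact Finset.mem_range.mp hk) (1 : Ω → ℝ≥0∞))]
      simp
    calc T = ∫⁻ ω, ∑' k, (A k).indicator (1 : Ω → ℝ≥0∞) ω ∂P := lintegral_congr hpt
      _ = ∑' k, ∫⁻ ω, (A k).indicator (1 : Ω → ℝ≥0∞) ω ∂P :=
          lintegral_tsum fun k => (measurable_const.indicator (hA_m k)).aemeasurable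
      _ = ∑' k, P (A k) := tsum_congr fun k => lintegral_indicator_one (hA_m k)
  have hT_ne : T ≠ ⊤ := by
    have h2 : ∫⁻ ω, ((‖(τ ω : ℝ)‖₊ : ℝ≥0∞)) ∂P < ⊤ := hτ_int.2
    refine ne_of_lt (lt_of_le_of_lt (le_of_eq (lintegral_congr fun ω => ?_)) h2)
    simp
  have hτ_integral : ∫ ω, (τ ω : ℝ) ∂P = T.toReal := by
    rw [integral_eq_lintegral_of_nonneg_ae
      (Filter.Eventually.of_forall fun ω => Nat.cast_nonneg _) hτ_int.aestronglyMeasurable]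
    congr 1
    exact lintegral_congr fun ω => by simp [ENNReal.ofReal_natCast]
  have hf_meas : Measurable fun ω => M (τ ω) ω := by
    have h1 : Measurable fun p : Ω × ℕ => M p.2 p.1 :=
      measurable_from_prod_countable_left fun n => hM_meas n
    exact h1.comp (measurable_id.prodMk hτ_meas)
  have hL : ∫⁻ ω, ENNReal.ofReal (M (τ ω) ω) ∂P ≤ ENNReal.ofReal N + K * T := by
    have hpt : ∀ ω, ENNReal.ofReal (M (τ ω) ω) ≤
        ENNReal.ofReal (N : ℝ) + ∑' k, g (W (k + 1) ω) * (A k).indicator 1 ω := by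
      intro ω
      refine le_trans (ENNReal.ofReal_le_ofReal (hkey (τ ω) ω)) ?_
      rw [ENNReal.ofReal_add (Nat.cast_nonneg N)
          (Finset.sum_nonneg fun k _ => le_max_right _ _),
        ENNReal.ofReal_sum_of_nonneg fun k _ => le_max_right _ _]
      refine add_le_add_right ?_ _
      have heq : ∀ k ∈ Finset.range (τ ω), ENNReal.ofReal (max (W (k + 1) ω - N) 0) =
          g (W (k + 1) ω) * (A k).indicator 1 ω := by
        intro k hk
        rw [Set.indicator_of_mem (by exact Finset.mem_range.mp hk) (1 : Ω → ℝ≥0∞),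
          Pi.one_apply, mul_one]
      rw [Finset.sum_congr rfl heq]
      exact ENNReal.sum_le_tsum _
    calc ∫⁻ ω, ENNReal.ofReal (M (τ ω) ω) ∂P
        ≤ ∫⁻ ω, (ENNReal.ofReal (N : ℝ) +
            ∑' k, g (W (k + 1) ω) * (A k).indicator 1 ω) ∂P := lintegral_mono hpt
      _ = ENNReal.ofReal (N : ℝ) +
            ∫⁻ ω, ∑' k, g (W (k + 1) ω) * (A k).indicator 1 ω ∂P := by
          rw [lintegral_add_left measurable_const, lintegral_const, measure_univ, mul_one]
      _ = ENNReal.ofReal (N : ℝ) +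
            ∑' k, ∫⁻ ω, g (W (k + 1) ω) * (A k).indicator 1 ω ∂P := by
          congr 1
          exact lintegral_tsum fun k => ((hg_meas.comp (hW_meas (k + 1))).mul
            (measurable_const.indicator (hA_m k))).aemeasurable
      _ = ENNReal.ofReal (N : ℝ) + ∑' k, K * P (A k) := by rw [tsum_congr hprod]
      _ = ENNReal.ofReal (N : ℝ) + K * T := by rw [ENNReal.tsum_mul_left, hT_eq]
  have h1 : ∫ ω, M (τ ω) ω ∂P = (∫⁻ ω, ENNReal.ofReal (M (τ ω) ω) ∂P).toReal :=
    integral_eq_lintegral_of_nonneg_ae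
      (Filter.Eventually.of_forall fun ω => hM_nonneg _ _) hf_meas.aestronglyMeasurable
  rw [h1, hτ_integral]
  have h2 : ∫⁻ ω, ENNReal.ofReal (M (τ ω) ω) ∂P ≤
      ENNReal.ofReal (N : ℝ) + ENNReal.ofReal ε * T :=
    le_trans hL (add_le_add_right (mul_le_mul_left hK_le T) _)
  have hRHS_ne : ENNReal.ofReal (N : ℝ) + ENNReal.ofReal ε * T ≠ ⊤ :=
    ENNReal.add_ne_top.2 ⟨ENNReal.ofReal_ne_top,
      ENNReal.mul_ne_top ENNReal.ofReal_ne_top hT_ne⟩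
  calc (∫⁻ ω, ENNReal.ofReal (M (τ ω) ω) ∂P).toReal
      ≤ (ENNReal.ofReal (N : ℝ) + ENNReal.ofReal ε * T).toReal :=
        ENNReal.toReal_mono hRHS_ne h2
    _ = ε * T.toReal + N := by
        rw [ENNReal.toReal_add ENNReal.ofReal_ne_top
            (ENNReal.mul_ne_top ENNReal.ofReal_ne_top hT_ne),
          ENNReal.toReal_mul, ENNReal.toReal_ofReal hε.le,
          ENNReal.toReal_ofReal (Nat.cast_nonneg N)]
        ring
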